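/- arXiv:1707.07318 — 2 statements merged into one kernel-verified Lean document; each statement's English description precedes it below -/
import Mathlib

section
/- For all natural numbers p and q with 1 ≤ p, 1 ≤ q and p ≠ q, if ω₃(p, q) = 1 then ω₃(q, p ^^^ q) = 1 and ω₃(p ^^^ q, p) = 1 (the quaternion property for the twist of the doubling product P₃). -/
/-- Twist of the Cayley–Dickson doubling product `P₃ : (a,b)(c,d) = (ac − db*, a*d + cb)`. -/
def omega3 (p q : ℕ) : ℤ :=
  if p = 0 ∧ q = 0 then 1
  else if p % 2 = 0 then
    if q % 2 = 0 then omega3 (p / 2) (q / 2)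
    else if 0 < p / 2 then -omega3 (p / 2) (q / 2) else 1
  else
    if q % 2 = 0 then omega3 (q / 2) (p / 2)
    else if 0 < p / 2 then omega3 (q / 2) (p / 2) else -1
termination_by p + q
decreasing_by all_goals omega

/- ### auxiliary xor lemmas -/

lemma xor_div_two (m n : ℕ) : (m ^^^ n) / 2 = m / 2 ^^^ n / 2 := by
  apply Nat.eq_of_testBit_eq
  intro i
  simp [← Nat.testBit_succ]

lemma xor_le_add (a b : ℕ) : a ^^^ b ≤ a + b := by
  rcases Nat.eq_zero_or_pos (a + b) with h | h
  · have ha : a = 0 := by omega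
    have hb : b = 0 := by omega
    simp [ha, hb]
  · have h1 : (a ^^^ b) % 2 = (a + b) % 2 := Nat.xor_mod_two_eq
    have h2 : (a ^^^ b) / 2 = a / 2 ^^^ b / 2 := xor_div_two a b
    have h3 : a / 2 ^^^ b / 2 ≤ a / 2 + b / 2 := xor_le_add (a / 2) (b / 2)
    omega
termination_by a + b
decreasing_by omega

lemma xee (a b : ℕ) : (2 * a) ^^^ (2 * b) = 2 * (a ^^^ b) := by
  have h1 : ((2 * a) ^^^ (2 * b)) % 2 = (2 * a + 2 * b) % 2 := Nat.xor_mod_two_eq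
  have h2 : ((2 * a) ^^^ (2 * b)) / 2 = (2 * a) / 2 ^^^ (2 * b) / 2 := xor_div_two _ _
  have e1 : 2 * a / 2 = a := by omega
  have e2 : 2 * b / 2 = b := by omega
  rw [e1, e2] at h2
  omega

lemma xeo (a b : ℕ) : (2 * a) ^^^ (2 * b + 1) = 2 * (a ^^^ b) + 1 := by
  have h1 : ((2 * a) ^^^ (2 * b + 1)) % 2 = (2 * a + (2 * b + 1)) % 2 := Nat.xor_mod_two_eq
  have h2 : ((2 * a) ^^^ (2 * b + 1)) / 2 = (2 * a) / 2 ^^^ (2 * b + 1) / 2 := xor_div_two _ _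
  have e1 : 2 * a / 2 = a := by omega
  have e2 : (2 * b + 1) / 2 = b := by omega
  rw [e1, e2] at h2
  omega

lemma xoe (a b : ℕ) : (2 * a + 1) ^^^ (2 * b) = 2 * (a ^^^ b) + 1 := by
  have h1 : ((2 * a + 1) ^^^ (2 * b)) % 2 = ((2 * a + 1) + 2 * b) % 2 := Nat.xor_mod_two_eq
  have h2 : ((2 * a + 1) ^^^ (2 * b)) / 2 = (2 * a + 1) / 2 ^^^ (2 * b) / 2 := xor_div_two _ _
  have e1 : (2 * a + 1) / 2 = a := by omega
  have e2 : 2 * b / 2 = b := by omega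
  rw [e1, e2] at h2
  omega

lemma xoo (a b : ℕ) : (2 * a + 1) ^^^ (2 * b + 1) = 2 * (a ^^^ b) := by
  have h1 : ((2 * a + 1) ^^^ (2 * b + 1)) % 2 = ((2 * a + 1) + (2 * b + 1)) % 2 :=
    Nat.xor_mod_two_eq
  have h2 : ((2 * a + 1) ^^^ (2 * b + 1)) / 2 = (2 * a + 1) / 2 ^^^ (2 * b + 1) / 2 :=
    xor_div_two _ _
  have e1 : (2 * a + 1) / 2 = a := by omega
  have e2 : (2 * b + 1) / 2 = b := by omega
  rw [e1, e2] at h2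
  omega

lemma xor_cancel_left' (a b : ℕ) : a ^^^ (a ^^^ b) = b := by
  rw [← Nat.xor_assoc, Nat.xor_self, Nat.zero_xor]

/- ### unfolding lemmas for omega3 -/

lemma omega3_zero_left (q : ℕ) : omega3 0 q = 1 := by
  rw [omega3]
  split_ifs <;>
    first
      | rfl
      | (simp only [Nat.zero_div]
         first
           | exact omega3_zero_left (q / 2)
           | exact omega3_zero_right (q / 2))
      | (exfalso; omega)
termination_by q
decreasing_by all_goals omega

lemma omega3_zero_right (p : ℕ) : omega3 p 0 = 1 := by
  rw [omega3]
  split_ifs <;>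
    first
      | rfl
      | (simp only [Nat.zero_div]
         first
           | exact omega3_zero_right (p / 2)
           | exact omega3_zero_left (p / 2))
      | (exfalso; omega)
termination_by p
decreasing_by all_goals omega

lemma omega3_ee (r s : ℕ) : omega3 (2 * r) (2 * s) = omega3 r s := by
  rw [omega3]
  by_cases h0 : 2 * r = 0 ∧ 2 * s = 0
  · have hr : r = 0 := by omega
    have hs : s = 0 := by omega
    subst hr; subst hs
    rw [if_pos ⟨rfl, rfl⟩, omega3]; simp
  · have h1 : 2 * r % 2 = 0 := by omega
    have h2 : 2 * s % 2 = 0 := by omega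
    have e1 : 2 * r / 2 = r := by omega
    have e2 : 2 * s / 2 = s := by omega
    rw [if_neg h0, if_pos h1, if_pos h2, e1, e2]

lemma omega3_eo (r s : ℕ) (hr : 0 < r) : omega3 (2 * r) (2 * s + 1) = -omega3 r s := by
  rw [omega3]
  have h0 : ¬(2 * r = 0 ∧ 2 * s + 1 = 0) := by omega
  have h1 : 2 * r % 2 = 0 := by omega
  have h2 : ¬((2 * s + 1) % 2 = 0) := by omega
  have e1 : 2 * r / 2 = r := by omega
  have e2 : (2 * s + 1) / 2 = s := by omega
  rw [if_neg h0, if_pos h1, if_neg h2, e1, e2, if_pos hr]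

lemma omega3_oe (r s : ℕ) : omega3 (2 * r + 1) (2 * s) = omega3 s r := by
  rw [omega3]
  have h0 : ¬(2 * r + 1 = 0 ∧ 2 * s = 0) := by omega
  have h1 : ¬((2 * r + 1) % 2 = 0) := by omega
  have h2 : 2 * s % 2 = 0 := by omega
  have e1 : (2 * r + 1) / 2 = r := by omega
  have e2 : 2 * s / 2 = s := by omega
  rw [if_neg h0, if_neg h1, if_pos h2, e1, e2]

lemma omega3_oo (r s : ℕ) (hr : 0 < r) : omega3 (2 * r + 1) (2 * s + 1) = omega3 s r := by
  rw [omega3]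
  have h0 : ¬(2 * r + 1 = 0 ∧ 2 * s + 1 = 0) := by omega
  have h1 : ¬((2 * r + 1) % 2 = 0) := by omega
  have h2 : ¬((2 * s + 1) % 2 = 0) := by omega
  have e1 : (2 * r + 1) / 2 = r := by omega
  have e2 : (2 * s + 1) / 2 = s := by omega
  rw [if_neg h0, if_neg h1, if_neg h2, e1, e2, if_pos (by omega : 0 < r)]

lemma omega3_one_odd (s : ℕ) : omega3 1 (2 * s + 1) = -1 := by
  rw [omega3]
  have h0 : ¬(1 = 0 ∧ 2 * s + 1 = 0) := by omega
  have h1 : ¬((1 : ℕ) % 2 = 0) := by omega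
  have h2 : ¬((2 * s + 1) % 2 = 0) := by omega
  rw [if_neg h0, if_neg h1, if_neg h2, if_neg (by omega : ¬(0 < 1 / 2))]

lemma omega3_self (r : ℕ) (hr : 1 ≤ r) : omega3 r r = -1 := by
  rcases Nat.even_or_odd r with ⟨t, ht⟩ | ⟨t, ht⟩
  · have h : r = 2 * t := by omega
    subst h
    rw [omega3_ee]
    exact omega3_self t (by omega)
  · have h : r = 2 * t + 1 := by omega
    subst h
    rcases Nat.eq_zero_or_pos t with rfl | htpos
    · exact omega3_one_odd 0
    · rw [omega3_oo t t htpos]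
      exact omega3_self t htpos
termination_by r
decreasing_by all_goals omega

lemma omega3_antisymm (p q : ℕ) (hp : 1 ≤ p) (hq : 1 ≤ q) (hpq : p ≠ q) :
    omega3 q p = -omega3 p q := by
  rcases Nat.even_or_odd p with ⟨r, hrp⟩ | ⟨r, hrp⟩ <;>
    rcases Nat.even_or_odd q with ⟨s, hsq⟩ | ⟨s, hsq⟩
  · -- even even
    have hp' : p = 2 * r := by omega
    have hq' : q = 2 * s := by omega
    subst hp'; subst hq'
    rw [omega3_ee, omega3_ee]
    exact omega3_antisymm r s (by omega) (by omega) (by omega)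
  · -- p even, q odd
    have hp' : p = 2 * r := by omega
    have hq' : q = 2 * s + 1 := by omega
    subst hp'; subst hq'
    rw [omega3_oe, omega3_eo r s (by omega)]
    all_goals ring
  · -- p odd, q even
    have hp' : p = 2 * r + 1 := by omega
    have hq' : q = 2 * s := by omega
    subst hp'; subst hq'
    rw [omega3_oe, omega3_eo s r (by omega)]
    all_goals ring
  · -- both odd
    have hp' : p = 2 * r + 1 := by omega
    have hq' : q = 2 * s + 1 := by omega
    subst hp'; subst hq'
    rcases Nat.eq_zero_or_pos r with rfl | hr
    · have hs : 1 ≤ s := by omega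
      show omega3 (2 * s + 1) (2 * 0 + 1) = -omega3 (2 * 0 + 1) (2 * s + 1)
      rw [omega3_oo s 0 hs, omega3_one_odd s, omega3_zero_left]
      all_goals ring
    · rcases Nat.eq_zero_or_pos s with rfl | hs
      · show omega3 (2 * 0 + 1) (2 * r + 1) = -omega3 (2 * r + 1) (2 * 0 + 1)
        rw [omega3_one_odd r, omega3_oo r 0 hr, omega3_zero_left]
        all_goals ring
      · rw [omega3_oo r s hr, omega3_oo s r hs]
        exact omega3_antisymm s r hs hr (by omega)
termination_by p + q
decreasing_by all_goals omega

theorem omega3_cycle (p q : ℕ) (hp : 1 ≤ p) (hq : 1 ≤ q) (hpq : p ≠ q) :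
    omega3 q (p ^^^ q) = omega3 p q := by
  rcases Nat.even_or_odd p with ⟨r, hrp⟩ | ⟨r, hrp⟩ <;>
    rcases Nat.even_or_odd q with ⟨s, hsq⟩ | ⟨s, hsq⟩
  · -- p even, q even
    have hp' : p = 2 * r := by omega
    have hq' : q = 2 * s := by omega
    subst hp'; subst hq'
    have hle := xor_le_add r s
    rw [xee, omega3_ee, omega3_ee]
    exact omega3_cycle r s (by omega) (by omega) (by omega)
  · -- p even, q odd
    have hp' : p = 2 * r := by omega
    have hq' : q = 2 * s + 1 := by omega
    subst hp'; subst hq'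
    have hr : 1 ≤ r := by omega
    rw [xeo, omega3_eo r s hr]
    rcases Nat.eq_zero_or_pos s with rfl | hs
    · -- q = 1
      rw [Nat.xor_zero]
      show omega3 (2 * 0 + 1) (2 * r + 1) = -omega3 r 0
      rw [omega3_one_odd r, omega3_zero_right]
      all_goals ring
    · by_cases hrs : r = s
      · subst hrs
        rw [Nat.xor_self]
        show omega3 (2 * r + 1) (2 * 0 + 1) = -omega3 r r
        rw [omega3_oo r 0 hr, omega3_zero_left, omega3_self r hr]
        all_goals ring
      · have hle := xor_le_add r s
        have ht : 1 ≤ r ^^^ s := by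
          rcases Nat.eq_zero_or_pos (r ^^^ s) with h0 | h0
          · exact absurd (Nat.xor_eq_zero_iff.mp h0) hrs
          · exact h0
        rw [omega3_oo s (r ^^^ s) hs]
        have hrt : r ≠ r ^^^ s := by
          intro he
          have : r ^^^ (r ^^^ s) = 0 := by rw [← he, Nat.xor_self]
          rw [Nat.xor_xor_cancel_left] at this
          omega
        have hst : s ≠ r ^^^ s := by
          intro he
          have : s ^^^ (r ^^^ s) = 0 := by rw [← he, Nat.xor_self]
          rw [Nat.xor_comm r s, Nat.xor_xor_cancel_left] at this
          omega
        have c1 : omega3 (r ^^^ s) (r ^^^ (r ^^^ s)) = omega3 r (r ^^^ s) :=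
          omega3_cycle r (r ^^^ s) hr ht hrt
        rw [Nat.xor_xor_cancel_left] at c1
        have c2 : omega3 (r ^^^ s) (s ^^^ (r ^^^ s)) = omega3 s (r ^^^ s) :=
          omega3_cycle s (r ^^^ s) hs ht hst
        rw [Nat.xor_comm r s, Nat.xor_xor_cancel_left, Nat.xor_comm s r] at c2
        have c3 : omega3 s (r ^^^ s) = omega3 r s := omega3_cycle r s hr hs hrs
        have a1 : omega3 r (r ^^^ s) = -omega3 (r ^^^ s) r :=
          omega3_antisymm (r ^^^ s) r ht hr (fun he => hrt he.symm)
        linarith [c1, c2, c3, a1]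
  · -- p odd, q even
    have hp' : p = 2 * r + 1 := by omega
    have hq' : q = 2 * s := by omega
    subst hp'; subst hq'
    have hs : 1 ≤ s := by omega
    rw [xoe, omega3_oe]
    rw [omega3_eo s (r ^^^ s) hs]
    rcases Nat.eq_zero_or_pos r with rfl | hr
    · rw [Nat.zero_xor, omega3_self s hs, omega3_zero_right]
      all_goals ring
    · by_cases hrs : r = s
      · subst hrs
        rw [Nat.xor_self, omega3_zero_right, omega3_self r hs]
        all_goals ring
      · have hle := xor_le_add r s
        have ht : 1 ≤ r ^^^ s := by
          rcases Nat.eq_zero_or_pos (r ^^^ s) with h0 | h0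
          · exact absurd (Nat.xor_eq_zero_iff.mp h0) hrs
          · exact h0
        have c3 : omega3 s (r ^^^ s) = omega3 r s := omega3_cycle r s hr hs hrs
        have a1 : omega3 s r = -omega3 r s := omega3_antisymm r s hr hs hrs
        linarith [c3, a1]
  · -- p odd, q odd
    have hp' : p = 2 * r + 1 := by omega
    have hq' : q = 2 * s + 1 := by omega
    subst hp'; subst hq'
    have hrs : r ≠ s := by omega
    rw [xoo, omega3_oe]
    rcases Nat.eq_zero_or_pos r with rfl | hr
    · have hs : 1 ≤ s := by omega
      rw [Nat.zero_xor, omega3_self s hs]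
      show (-1 : ℤ) = omega3 (2 * 0 + 1) (2 * s + 1)
      rw [omega3_one_odd s]
    · rcases Nat.eq_zero_or_pos s with rfl | hs
      · rw [Nat.xor_zero, omega3_zero_right, omega3_oo r 0 hr, omega3_zero_left]
      · have hle := xor_le_add r s
        have ht : 1 ≤ r ^^^ s := by
          rcases Nat.eq_zero_or_pos (r ^^^ s) with h0 | h0
          · exact absurd (Nat.xor_eq_zero_iff.mp h0) hrs
          · exact h0
        have hrt : r ≠ r ^^^ s := by
          intro he
          have : r ^^^ (r ^^^ s) = 0 := by rw [← he, Nat.xor_self]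
          rw [Nat.xor_xor_cancel_left] at this
          omega
        have c1 : omega3 (r ^^^ s) (r ^^^ (r ^^^ s)) = omega3 r (r ^^^ s) :=
          omega3_cycle r (r ^^^ s) hr ht hrt
        rw [Nat.xor_xor_cancel_left] at c1
        have c2 : omega3 r (s ^^^ r) = omega3 s r :=
          omega3_cycle s r hs hr (fun he => hrs he.symm)
        rw [Nat.xor_comm s r] at c2
        rw [omega3_oo r s hr, c1, c2]
termination_by p + q
decreasing_by all_goals omega

/-- The quaternion property for the twist of the doubling product P3. -/
theorem omega3_quaternion_property (p q : ℕ) (hp : 1 ≤ p) (hq : 1 ≤ q) (hpq : p ≠ q)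
    (h : omega3 p q = 1) :
    omega3 q (p ^^^ q) = 1 ∧ omega3 (p ^^^ q) p = 1 := by
  have hx1 : 1 ≤ p ^^^ q := by
    rcases Nat.eq_zero_or_pos (p ^^^ q) with h0 | h0
    · exact absurd (Nat.xor_eq_zero_iff.mp h0) hpq
    · exact h0
  have h1 : omega3 q (p ^^^ q) = 1 := (omega3_cycle p q hp hq hpq).trans h
  have hqx : q ≠ p ^^^ q := by
    intro he
    have h' : q ^^^ (p ^^^ q) = p := by
      rw [Nat.xor_comm p q]; exact Nat.xor_xor_cancel_left q p
    rw [← he, Nat.xor_self] at h'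
    omega
  have h2 := omega3_cycle q (p ^^^ q) hq hx1 hqx
  have he : q ^^^ (p ^^^ q) = p := by
    rw [Nat.xor_comm p q, xor_cancel_left']
  rw [he] at h2
  exact ⟨h1, h2.trans h1⟩
end

section
/- Recursive generation of triples for P₀: for all natural numbers p, q with 1 ≤ p, 1 ≤ q, p ≠ q, if ω₀(p, q) = 1 and r = p ^^^ q, then ω₀(2r, 2q) = 1, ω₀(2p, 2q+1) = 1, ω₀(2p+1, 2q) = 1 and ω₀(2p+1, 2q+1) = 1; that is, the triple (p,q,r) generates the triples (2r,2q,2p), (2p,2q+1,2r+1), (2p+1,2q,2r+1) and (2p+1,2q+1,2r). -/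
/-- Twist of the Cayley–Dickson doubling product `P₀ : (a,b)(c,d) = (ca − b*d, da* + bc)`. -/
def omega0 (p q : ℕ) : ℤ :=
  if p = 0 ∧ q = 0 then 1
  else if p % 2 = 0 then
    if q % 2 = 0 then omega0 (q / 2) (p / 2)
    else if 0 < p / 2 then -omega0 (q / 2) (p / 2) else 1
  else
    if q % 2 = 0 then omega0 (p / 2) (q / 2)
    else if 0 < p / 2 then omega0 (p / 2) (q / 2) else -1
termination_by p + q
decreasing_by all_goals omega

lemma xor_ee (a b : ℕ) : 2*a ^^^ 2*b = 2*(a^^^b) := by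
  simpa [Nat.bit, Nat.bit_false] using Nat.xor_bit false a false b

lemma xor_eo (a b : ℕ) : 2*a ^^^ (2*b+1) = 2*(a^^^b)+1 := by
  simpa [Nat.bit, Nat.bit_false, Nat.bit_true] using Nat.xor_bit false a true b

lemma xor_oe (a b : ℕ) : (2*a+1) ^^^ 2*b = 2*(a^^^b)+1 := by
  simpa [Nat.bit, Nat.bit_false, Nat.bit_true] using Nat.xor_bit true a false b

lemma xor_oo (a b : ℕ) : (2*a+1) ^^^ (2*b+1) = 2*(a^^^b) := by
  simpa [Nat.bit, Nat.bit_true] using Nat.xor_bit true a true b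

lemma omega0_ee (a b : ℕ) : omega0 (2*a) (2*b) = omega0 b a := by
  by_cases h : a = 0 ∧ b = 0
  · obtain ⟨rfl, rfl⟩ := h; rfl
  · have hc : ¬(2*a = 0 ∧ 2*b = 0) := by omega
    rw [omega0, if_neg hc]
    have h1 : 2*a % 2 = 0 := by omega
    have h2 : 2*b % 2 = 0 := by omega
    have h3 : 2*a/2 = a := by omega
    have h4 : 2*b/2 = b := by omega
    simp [h1, h2, h3, h4]

lemma omega0_eo (a b : ℕ) (ha : 0 < a) : omega0 (2*a) (2*b+1) = -omega0 b a := by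
  have hc : ¬(2*a = 0 ∧ 2*b+1 = 0) := by omega
  rw [omega0, if_neg hc]
  have h1 : 2*a % 2 = 0 := by omega
  have h2 : (2*b+1) % 2 = 1 := by omega
  have h3 : 2*a/2 = a := by omega
  have h4 : (2*b+1)/2 = b := by omega
  simp [h1, h2, h3, h4, ha]

lemma omega0_oe (a b : ℕ) : omega0 (2*a+1) (2*b) = omega0 a b := by
  have hc : ¬(2*a+1 = 0 ∧ 2*b = 0) := by omega
  rw [omega0, if_neg hc]
  have h1 : (2*a+1) % 2 = 1 := by omega
  have h2 : 2*b % 2 = 0 := by omega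
  have h3 : (2*a+1)/2 = a := by omega
  have h4 : 2*b/2 = b := by omega
  simp [h1, h2, h3, h4]

lemma omega0_oo (a b : ℕ) (ha : 0 < a) : omega0 (2*a+1) (2*b+1) = omega0 a b := by
  have hc : ¬(2*a+1 = 0 ∧ 2*b+1 = 0) := by omega
  rw [omega0, if_neg hc]
  have h1 : (2*a+1) % 2 = 1 := by omega
  have h2 : (2*b+1) % 2 = 1 := by omega
  have h3 : (2*a+1)/2 = a := by omega
  have h4 : (2*b+1)/2 = b := by omega
  simp [h1, h2, h3, h4, ha]

lemma omega0_oo0 (b : ℕ) : omega0 1 (2*b+1) = -1 := by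
  have hc : ¬((1:ℕ) = 0 ∧ 2*b+1 = 0) := by omega
  rw [omega0, if_neg hc]
  have h2 : (2*b+1) % 2 = 1 := by omega
  norm_num [h2]

lemma omega0_zero : ∀ p, omega0 p 0 = 1 ∧ omega0 0 p = 1 := by
  intro p
  induction p using Nat.strong_induction_on with
  | _ p ih =>
    rcases Nat.eq_zero_or_pos p with rfl | hp
    · constructor <;> · rw [omega0]; simp
    obtain ⟨a, rfl | rfl⟩ : ∃ a, p = 2*a ∨ p = 2*a+1 := ⟨p/2, by omega⟩
    · have h1 : omega0 (2*a) (2*0) = omega0 0 a := omega0_ee a 0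
      have h2 : omega0 (2*0) (2*a) = omega0 a 0 := omega0_ee 0 a
      have := ih a (by omega)
      constructor
      · simpa using h1.trans this.2
      · simpa using h2.trans this.1
    · have h1 : omega0 (2*a+1) (2*0) = omega0 a 0 := omega0_oe a 0
      have h2 : ¬((0:ℕ) = 0 ∧ 2*a+1 = 0) := by omega
      constructor
      · simpa using h1.trans (ih a (by omega)).1
      · rw [omega0, if_neg h2]
        have : (2*a+1) % 2 = 1 := by omega
        norm_num [this]

lemma omega0_diag : ∀ p, 1 ≤ p → omega0 p p = -1 := by
  intro p
  induction p using Nat.strong_induction_on with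
  | _ p ih =>
    intro hp
    obtain ⟨a, rfl | rfl⟩ : ∃ a, p = 2*a ∨ p = 2*a+1 := ⟨p/2, by omega⟩
    · rw [omega0_ee]; exact ih a (by omega) (by omega)
    · rcases Nat.eq_zero_or_pos a with rfl | ha
      · simpa using omega0_oo0 0
      · rw [omega0_oo a a ha]; exact ih a (by omega) ha

lemma omega0_antisym : ∀ n p q : ℕ, p + q ≤ n → 1 ≤ p → 1 ≤ q → p ≠ q →
    omega0 q p = -omega0 p q := by
  intro n
  induction n with
  | zero => intro p q h hp; omega
  | succ n ih =>
    intro p q hn hp hq hpq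
    obtain ⟨a, rfl | rfl⟩ : ∃ a, p = 2*a ∨ p = 2*a+1 := ⟨p/2, by omega⟩ <;>
      obtain ⟨b, rfl | rfl⟩ : ∃ b, q = 2*b ∨ q = 2*b+1 := ⟨q/2, by omega⟩
    · rw [omega0_ee, omega0_ee]
      exact ih b a (by omega) (by omega) (by omega) (by omega)
    · rw [omega0_eo a b (by omega), omega0_oe, neg_neg]
    · rw [omega0_eo b a (by omega), omega0_oe]
    · rcases Nat.eq_zero_or_pos a with rfl | ha
      · have hb : 0 < b := by omega
        rw [omega0_oo b 0 hb]
        simp [(omega0_zero b).1, omega0_oo0]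
      · rcases Nat.eq_zero_or_pos b with rfl | hb
        · rw [omega0_oo a 0 ha]
          simp [(omega0_zero a).1, omega0_oo0]
        · rw [omega0_oo a b ha, omega0_oo b a hb]
          exact ih a b (by omega) ha hb (by omega)

lemma omega0_antisym' (p q : ℕ) (hp : 1 ≤ p) (hq : 1 ≤ q) (hpq : p ≠ q) :
    omega0 q p = -omega0 p q :=
  omega0_antisym (p + q) p q le_rfl hp hq hpq

lemma omega0_cyc : ∀ n p q : ℕ, p + q ≤ n → 1 ≤ p → 1 ≤ q → p ≠ q →
    omega0 q (p ^^^ q) = omega0 p q := by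
  intro n
  induction n with
  | zero => intro p q h hp; omega
  | succ n ih =>
    intro p q hn hp hq hpq
    obtain ⟨a, rfl | rfl⟩ : ∃ a, p = 2*a ∨ p = 2*a+1 := ⟨p/2, by omega⟩ <;>
      obtain ⟨b, rfl | rfl⟩ : ∃ b, q = 2*b ∨ q = 2*b+1 := ⟨q/2, by omega⟩
    · -- p = 2a, q = 2b
      have ha : 1 ≤ a := by omega
      have hb : 1 ≤ b := by omega
      have hab : a ≠ b := by omega
      have hc1 : 1 ≤ a ^^^ b := by
        rcases Nat.eq_zero_or_pos (a ^^^ b) with h0 | h0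
        · exact absurd (Nat.xor_eq_zero_iff.mp h0) hab
        · exact h0
      have hbc : b ≠ a ^^^ b := by
        intro hcontra
        have : a = 0 := by
          have := congrArg (· ^^^ b) hcontra
          simpa [Nat.xor_assoc] using this.symm
        omega
      rw [xor_ee, omega0_ee, omega0_ee]
      rw [omega0_antisym' b (a ^^^ b) hb hc1 hbc,
          ih a b (by omega) ha hb hab,
          omega0_antisym' a b ha hb hab]
    · -- p = 2a, q = 2b+1, a ≥ 1
      have ha : 1 ≤ a := by omega
      rw [xor_eo, omega0_eo a b ha]
      rcases Nat.eq_zero_or_pos b with rfl | hb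
      · have h0 : a ^^^ 0 = a := Nat.xor_zero a
        rw [h0, (omega0_zero a).2]
        simpa using omega0_oo0 a
      · rw [omega0_oo b (a ^^^ b) hb]
        rcases eq_or_ne a b with rfl | hab
        · simp [omega0_diag a ha, (omega0_zero a).1]
        · rw [ih a b (by omega) ha hb hab, omega0_antisym' a b ha hb hab, neg_neg]
    · -- p = 2a+1, q = 2b, b ≥ 1
      have hb : 1 ≤ b := by omega
      rw [xor_oe, omega0_eo b (a ^^^ b) hb, omega0_oe]
      rcases Nat.eq_zero_or_pos a with rfl | ha
      · simp [Nat.zero_xor, omega0_diag b hb, (omega0_zero b).2]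
      · rcases eq_or_ne a b with rfl | hab
        · simp [(omega0_zero a).2, omega0_diag a ha]
        · have hc1 : 1 ≤ a ^^^ b := by
            rcases Nat.eq_zero_or_pos (a ^^^ b) with h0 | h0
            · exact absurd (Nat.xor_eq_zero_iff.mp h0) hab
            · exact h0
          have hbc : b ≠ a ^^^ b := by
            intro hcontra
            have : a = 0 := by
              have := congrArg (· ^^^ b) hcontra
              simpa [Nat.xor_assoc] using this.symm
            omega
          rw [omega0_antisym' b (a ^^^ b) hb hc1 hbc, neg_neg,
              ih a b (by omega) ha hb hab]
    · -- p = 2a+1, q = 2b+1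
      have hab : a ≠ b := by omega
      rw [xor_oo, omega0_oe]
      rcases Nat.eq_zero_or_pos a with rfl | ha
      · have hb : 1 ≤ b := by omega
        rw [Nat.zero_xor, omega0_diag b hb]
        show (-1 : ℤ) = omega0 1 (2*b+1)
        rw [omega0_oo0 b]
      · rcases Nat.eq_zero_or_pos b with rfl | hb
        · rw [Nat.xor_zero, (omega0_zero a).2, omega0_oo a 0 ha, (omega0_zero a).1]
        · rw [ih a b (by omega) ha hb hab, omega0_oo a b ha]

/-- Recursive generation of structure-constant triples for the doubling product P0. -/
theorem omega0_triple_generation (p q r : ℕ) (hp : 1 ≤ p) (hq : 1 ≤ q) (hpq : p ≠ q)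
    (h : omega0 p q = 1) (hr : r = p ^^^ q) :
    omega0 (2 * r) (2 * q) = 1 ∧
    omega0 (2 * p) (2 * q + 1) = 1 ∧
    omega0 (2 * p + 1) (2 * q) = 1 ∧
    omega0 (2 * p + 1) (2 * q + 1) = 1 := by
  refine ⟨?_, ?_, ?_, ?_⟩
  · rw [omega0_ee, hr]
    rw [omega0_cyc (p + q) p q le_rfl hp hq hpq] at *
    exact h
  · rw [omega0_eo p q hp, omega0_antisym' p q hp hq hpq, h, neg_neg]
  · rw [omega0_oe, h]
  · rw [omega0_oo p q hp, h]
end
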